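/- If y ∈ ℝⁿ does not lie in the column space of X (so that S²_y > 0) and a is a real number with a > 1 − (n − q)/2, then ∫_0^∞ ∫_{ℝ^q} (σ²)^{−n/2 − a} det(Σ)^{−1/2} exp{−(y − Xθ)'Σ^{-1}(y − Xθ)/(2σ²)} dθ d(σ²) = (2π)^{q/2} · 2^{(n−q)/2 + a − 1} · Γ((n−q)/2 + a − 1) · det(Σ)^{−1/2} · det(X'Σ^{-1}X)^{−1/2} · (S²_y)^{−((n−q)/2 + a − 1)}; in particular the double integral is finite. -/

import Mathlib

open Matrix MeasureTheory Real Set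
open scoped MatrixOrder

lemma gauss_pi_integrable (q : ℕ) {c : ℝ} (hc : 0 < c) :
    Integrable (fun x : Fin q → ℝ => Real.exp (-c * ∑ i, x i ^ 2)) := by
  have h : (fun x : Fin q → ℝ => Real.exp (-c * ∑ i, x i ^ 2))
      = fun x => ∏ i, Real.exp (-c * x i ^ 2) := by
    funext x
    rw [← Real.exp_sum, Finset.mul_sum]
  rw [h]
  exact Integrable.fintype_prod (fun _ => integrable_exp_neg_mul_sq hc)

lemma gauss_pi_integral (q : ℕ) {c : ℝ} (hc : 0 < c) :
    ∫ x : Fin q → ℝ, Real.exp (-c * ∑ i, x i ^ 2) = (π / c) ^ ((q : ℝ) / 2) := by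
  have h : (fun x : Fin q → ℝ => Real.exp (-c * ∑ i, x i ^ 2))
      = fun x => ∏ i, Real.exp (-c * x i ^ 2) := by
    funext x
    rw [← Real.exp_sum, Finset.mul_sum]
  rw [h, volume_pi, integral_fintype_prod_eq_pow (ι := Fin q) (fun t : ℝ => Real.exp (-c * t ^ 2)),
    integral_gaussian, Fintype.card_fin]
  rw [Real.sqrt_eq_rpow, ← Real.rpow_natCast ((π / c) ^ ((1:ℝ)/2)) q, ← Real.rpow_mul
    (by positivity)]
  ring_nf

lemma gauss_quad {q : ℕ} {A : Matrix (Fin q) (Fin q) ℝ} (hA : A.PosDef) {c : ℝ} (hc : 0 < c)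
    (m : Fin q → ℝ) :
    Integrable (fun θ : Fin q → ℝ => Real.exp (-c * ((θ - m) ⬝ᵥ A *ᵥ (θ - m)))) ∧
    ∫ θ : Fin q → ℝ, Real.exp (-c * ((θ - m) ⬝ᵥ A *ᵥ (θ - m)))
      = (π / c) ^ ((q : ℝ) / 2) * A.det ^ (-(1:ℝ)/2) := by
  classical
  set B := CFC.sqrt A with hBdef
  have hBB : B * B = A := CFC.sqrt_mul_sqrt_self A (Matrix.nonneg_iff_posSemidef.mpr hA.posSemidef)
  have hBherm : B.IsHermitian := (Matrix.nonneg_iff_posSemidef.mp (CFC.sqrt_nonneg A)).1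
  have hBt : Bᵀ = B := by
    have := hBherm.eq
    rwa [conjTranspose_eq_transpose_of_trivial] at this
  have hdetA : (0:ℝ) < A.det := hA.det_pos
  have hdetB2 : B.det * B.det = A.det := by rw [← det_mul, hBB]
  have hdetBne : B.det ≠ 0 := by
    intro h; rw [h, mul_zero] at hdetB2; exact hdetA.ne (hdetB2)
  have habs : |B.det| = Real.sqrt A.det := by
    rw [← Real.sqrt_mul_self (abs_nonneg B.det)]
    congr 1
    rw [abs_mul_abs_self, hdetB2]
  -- the quadratic form as a sum of squares
  have hquad : ∀ v : Fin q → ℝ, v ⬝ᵥ A *ᵥ v = ∑ i, (B *ᵥ v) i ^ 2 := by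
    intro v
    have : A *ᵥ v = B *ᵥ (B *ᵥ v) := by rw [mulVec_mulVec, hBB]
    rw [this, dotProduct_mulVec, ← mulVec_transpose, hBt]
    simp [dotProduct, pow_two]
  -- the change of variables map
  have h3 : Measurable (⇑(Matrix.toLin' B) : (Fin q → ℝ) → (Fin q → ℝ)) :=
    (Matrix.toLin' B).continuous_of_finiteDimensional.measurable
  have h4 : Measurable (fun θ : Fin q → ℝ => θ - m) := measurable_id.sub_const m
  have hmapT : Measure.map (fun θ : Fin q → ℝ => B *ᵥ (θ - m)) volume
      = ENNReal.ofReal |B.det|⁻¹ • volume := by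
    have h1 : Measure.map (fun θ : Fin q → ℝ => θ - m) volume = volume :=
      (measurePreserving_sub_right volume m).map_eq
    have h2 : (fun θ : Fin q → ℝ => B *ᵥ (θ - m))
        = (Matrix.toLin' B) ∘ (fun θ : Fin q → ℝ => θ - m) := by
      funext θ; simp [Matrix.toLin'_apply]
    rw [h2, ← Measure.map_map h3 h4, h1,
      Real.map_matrix_volume_pi_eq_smul_volume_pi hdetBne, abs_inv]
  have hf0meas : AEStronglyMeasurable (fun x : Fin q → ℝ => Real.exp (-c * ∑ i, x i ^ 2))
      (Measure.map (fun θ : Fin q → ℝ => B *ᵥ (θ - m)) volume) := by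
    apply Continuous.aestronglyMeasurable
    exact Real.continuous_exp.comp (continuous_const.mul (continuous_finset_sum _
      (fun i _ => (continuous_apply i).pow 2)))
  have hTmeas : AEMeasurable (fun θ : Fin q → ℝ => B *ᵥ (θ - m)) volume := by
    apply Measurable.aemeasurable
    have h2 : (fun θ : Fin q → ℝ => B *ᵥ (θ - m))
        = (Matrix.toLin' B) ∘ (fun θ : Fin q → ℝ => θ - m) := by
      funext θ; simp [Matrix.toLin'_apply]
    rw [h2]
    exact h3.comp h4
  have hcomp : (fun θ : Fin q → ℝ => Real.exp (-c * ((θ - m) ⬝ᵥ A *ᵥ (θ - m))))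
      = fun θ : Fin q → ℝ => Real.exp (-c * ∑ i, (B *ᵥ (θ - m)) i ^ 2) := by
    funext θ; rw [hquad]
  have hdet12 : |B.det|⁻¹ = A.det ^ (-(1:ℝ)/2) := by
    rw [habs, Real.sqrt_eq_rpow, ← Real.rpow_neg_one ((A.det) ^ ((1:ℝ)/2)),
      ← Real.rpow_mul hdetA.le]
    norm_num
  constructor
  · rw [hcomp]
    have hi : Integrable ((fun x : Fin q → ℝ => Real.exp (-c * ∑ i, x i ^ 2))
        ∘ (fun θ : Fin q → ℝ => B *ᵥ (θ - m))) volume := by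
      rw [← integrable_map_measure hf0meas hTmeas, hmapT]
      exact (gauss_pi_integrable q hc).smul_measure ENNReal.ofReal_ne_top
    simpa [Function.comp_def] using hi
  · rw [hcomp]
    have hI := integral_map hTmeas hf0meas
    rw [hmapT, integral_smul_measure, gauss_pi_integral q hc] at hI
    rw [← hI, ENNReal.toReal_ofReal (by positivity), smul_eq_mul, hdet12, mul_comm]

lemma mulVec_inj {n q : ℕ} {X : Matrix (Fin n) (Fin q) ℝ} (hX : X.rank = q) :
    Function.Injective (X.mulVec) := by
  have h1 : LinearMap.ker X.mulVecLin = ⊥ := by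
    have h2 := X.mulVecLin.finrank_range_add_finrank_ker
    rw [← Matrix.rank, hX] at h2
    simp only [Module.finrank_pi, Fintype.card_fin] at h2
    have : Module.finrank ℝ (LinearMap.ker X.mulVecLin) = 0 := by omega
    exact Submodule.finrank_eq_zero.mp this
  have := LinearMap.ker_eq_bot.mp h1
  simpa [Matrix.coe_mulVecLin] using this

lemma XtSiX_posDef {n q : ℕ} {Sg : Matrix (Fin n) (Fin n) ℝ} (hSg : Sg.PosDef)
    {X : Matrix (Fin n) (Fin q) ℝ} (hX : X.rank = q) : (Xᵀ * Sg⁻¹ * X).PosDef := by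
  have hSi : (Sg⁻¹).PosDef := hSg.inv
  have hSit : (Sg⁻¹)ᵀ = Sg⁻¹ := by
    have := hSi.isHermitian.eq
    rwa [conjTranspose_eq_transpose_of_trivial] at this
  refine Matrix.PosDef.of_dotProduct_mulVec_pos ?_ ?_
  · rw [Matrix.IsHermitian, conjTranspose_eq_transpose_of_trivial, Matrix.transpose_mul,
      Matrix.transpose_mul, transpose_transpose, hSit, Matrix.mul_assoc]
  · intro x hx
    have hXx : X *ᵥ x ≠ 0 := by
      intro h
      apply hx
      apply mulVec_inj hX
      rw [h, Matrix.mulVec_zero]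
    have := hSi.dotProduct_mulVec_pos hXx
    simp only [star_trivial] at this ⊢
    calc x ⬝ᵥ (Xᵀ * Sg⁻¹ * X) *ᵥ x
        = x ⬝ᵥ Xᵀ *ᵥ (Sg⁻¹ *ᵥ (X *ᵥ x)) := by rw [mulVec_mulVec, mulVec_mulVec]
      _ = (X *ᵥ x) ⬝ᵥ Sg⁻¹ *ᵥ (X *ᵥ x) := by
          rw [Matrix.dotProduct_mulVec x Xᵀ, Matrix.vecMul_transpose]
      _ > 0 := this

lemma complete_square {n q : ℕ} {Si : Matrix (Fin n) (Fin n) ℝ} (hSit : Siᵀ = Si)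
    (X : Matrix (Fin n) (Fin q) ℝ) {A : Matrix (Fin q) (Fin q) ℝ}
    (hA : A = Xᵀ * Si * X) (hAinv : A * A⁻¹ = 1)
    (y : Fin n → ℝ) (θ : Fin q → ℝ) :
    (y - X *ᵥ θ) ⬝ᵥ Si *ᵥ (y - X *ᵥ θ)
      = (θ - (A⁻¹ * Xᵀ * Si) *ᵥ y) ⬝ᵥ A *ᵥ (θ - (A⁻¹ * Xᵀ * Si) *ᵥ y)
        + y ⬝ᵥ (Si * (1 - X * A⁻¹ * Xᵀ * Si)) *ᵥ y := by
  set m := (A⁻¹ * Xᵀ * Si) *ᵥ y with hm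
  set r := y - X *ᵥ m with hr
  have hdot : ∀ (u : Fin q → ℝ) (w : Fin n → ℝ),
      (X *ᵥ u) ⬝ᵥ Si *ᵥ w = u ⬝ᵥ (Xᵀ *ᵥ (Si *ᵥ w)) := by
    intro u w
    rw [dotProduct_comm, Matrix.dotProduct_mulVec (Si *ᵥ w) X, ← Matrix.mulVec_transpose,
      dotProduct_comm]
  have hsym : ∀ (u w : Fin n → ℝ), u ⬝ᵥ Si *ᵥ w = w ⬝ᵥ Si *ᵥ u := by
    intro u w
    rw [Matrix.dotProduct_mulVec, ← Matrix.mulVec_transpose, hSit, dotProduct_comm]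
  have hkey : Xᵀ *ᵥ (Si *ᵥ r) = 0 := by
    rw [hr, Matrix.mulVec_sub, Matrix.mulVec_sub, hm]
    simp only [mulVec_mulVec]
    rw [← Matrix.mul_assoc, ← Matrix.mul_assoc]
    have h5 : Xᵀ * Si * X * (A⁻¹ * Xᵀ * Si) = Xᵀ * Si := by
      rw [← hA, ← Matrix.mul_assoc, ← Matrix.mul_assoc, hAinv, Matrix.one_mul]
    rw [h5, sub_self]
  have hsplit : y - X *ᵥ θ = r + X *ᵥ (m - θ) := by
    rw [hr, Matrix.mulVec_sub]
    abel
  have hcross : (X *ᵥ (m - θ)) ⬝ᵥ Si *ᵥ r = 0 := by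
    rw [hdot, hkey, dotProduct_zero]
  have hXAX : (X *ᵥ (m - θ)) ⬝ᵥ Si *ᵥ (X *ᵥ (m - θ)) = (θ - m) ⬝ᵥ A *ᵥ (θ - m) := by
    rw [hdot, mulVec_mulVec, mulVec_mulVec, ← hA]
    have : θ - m = -(m - θ) := by abel
    rw [this, Matrix.mulVec_neg, dotProduct_neg, neg_dotProduct, neg_neg]
  have hrSr : r ⬝ᵥ Si *ᵥ r = y ⬝ᵥ (Si * (1 - X * A⁻¹ * Xᵀ * Si)) *ᵥ y := by
    have h6 : r ⬝ᵥ Si *ᵥ r = y ⬝ᵥ Si *ᵥ r := by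
      rw [hr, sub_dotProduct, hdot, hkey, dotProduct_zero, sub_zero]
    rw [h6]
    have h7 : Si *ᵥ r = (Si * (1 - X * A⁻¹ * Xᵀ * Si)) *ᵥ y := by
      rw [hr, Matrix.mulVec_sub, hm]
      simp only [mulVec_mulVec]
      rw [Matrix.mul_sub, Matrix.mul_one, Matrix.sub_mulVec]
      congr 2
      simp only [Matrix.mul_assoc]
    rw [h7]
  calc (y - X *ᵥ θ) ⬝ᵥ Si *ᵥ (y - X *ᵥ θ)
      = (r + X *ᵥ (m - θ)) ⬝ᵥ Si *ᵥ (r + X *ᵥ (m - θ)) := by rw [← hsplit]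
    _ = r ⬝ᵥ Si *ᵥ r + r ⬝ᵥ Si *ᵥ (X *ᵥ (m - θ)) + ((X *ᵥ (m - θ)) ⬝ᵥ Si *ᵥ r
        + (X *ᵥ (m - θ)) ⬝ᵥ Si *ᵥ (X *ᵥ (m - θ))) := by
        rw [Matrix.mulVec_add, add_dotProduct, dotProduct_add, dotProduct_add]
    _ = r ⬝ᵥ Si *ᵥ r + (θ - m) ⬝ᵥ A *ᵥ (θ - m) := by
        rw [hsym r (X *ᵥ (m - θ)), hcross, hXAX]
        ring
    _ = (θ - m) ⬝ᵥ A *ᵥ (θ - m) + y ⬝ᵥ (Si * (1 - X * A⁻¹ * Xᵀ * Si)) *ᵥ y := by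
        rw [hrSr]; ring

lemma g_integrable {b S : ℝ} (hb : 0 < b) (hS : 0 < S) :
    IntegrableOn (fun t : ℝ => t ^ (b - 1) * Real.exp (-(S / 2 * t))) (Ioi 0) := by
  have h0 : IntegrableOn (fun x : ℝ => Real.exp (-x) * x ^ (b - 1)) (Ioi 0) :=
    Real.GammaIntegral_convergent hb
  have h2 : (0:ℝ) < S / 2 := by linarith
  have h1 : IntegrableOn (fun x : ℝ => Real.exp (-(x * (S/2))) * (x * (S/2)) ^ (b - 1))
      (Ioi 0) := by
    have := (integrableOn_Ioi_comp_mul_right_iff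
      (fun x : ℝ => Real.exp (-x) * x ^ (b - 1)) 0 h2).mpr
    rw [zero_mul] at this
    exact this h0
  apply (integrableOn_congr_fun _ measurableSet_Ioi).mp
    (h1.const_mul ((S/2) ^ (1-b)))
  intro x hx
  have hx0 : (0:ℝ) < x := hx
  have hc : (S/2:ℝ) ^ (1-b) * (S/2) ^ (b-1) = 1 := by
    rw [← Real.rpow_add h2]; norm_num
  dsimp only
  rw [Real.mul_rpow hx0.le h2.le, mul_comm x (S/2)]
  calc (S/2) ^ (1-b) * (Real.exp (-(S/2 * x)) * (x ^ (b-1) * (S/2) ^ (b-1)))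
      = ((S/2) ^ (1-b) * (S/2) ^ (b-1)) * (x ^ (b-1) * Real.exp (-(S/2 * x))) := by ring
    _ = x ^ (b-1) * Real.exp (-(S/2 * x)) := by rw [hc, one_mul]

lemma outer_eq : ∀ {b S : ℝ}, 0 < S → ∀ x ∈ Ioi (0:ℝ),
    ((|(-1:ℝ)| * x ^ ((-1:ℝ) - 1)) • ((x ^ (-1:ℝ)) ^ (b - 1) *
      Real.exp (-(S / 2 * (x ^ (-1:ℝ))))))
      = x ^ (-b - 1) * Real.exp (-S / (2 * x)) := by
  intro b S hS x hx
  have hx0 : (0:ℝ) < x := hx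
  rw [abs_neg, abs_one, one_mul, smul_eq_mul, ← Real.rpow_mul hx0.le,
    ← mul_assoc, ← Real.rpow_add hx0]
  have e1 : (-1:ℝ) - 1 + -1 * (b - 1) = -b - 1 := by ring
  rw [e1, Real.rpow_neg_one]
  congr 2
  field_simp

lemma outer_integrable {b S : ℝ} (hb : 0 < b) (hS : 0 < S) :
    IntegrableOn (fun s : ℝ => s ^ (-b - 1) * Real.exp (-S / (2 * s))) (Ioi 0) := by
  have key := (integrableOn_Ioi_comp_rpow_iff
    (fun t : ℝ => t ^ (b - 1) * Real.exp (-(S / 2 * t))) (p := -1) (by norm_num)).mpr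
    (g_integrable hb hS)
  apply (integrableOn_congr_fun _ measurableSet_Ioi).mp key
  intro x hx
  exact outer_eq hS x hx

lemma outer_integral {b S : ℝ} (hb : 0 < b) (hS : 0 < S) :
    ∫ s in Ioi 0, s ^ (-b - 1) * Real.exp (-S / (2 * s))
      = (2:ℝ) ^ b * Real.Gamma b * S ^ (-b) := by
  have key := integral_comp_rpow_Ioi
    (fun t : ℝ => t ^ (b - 1) * Real.exp (-(S / 2 * t))) (p := -1) (by norm_num)
  have h2 : (0:ℝ) < S / 2 := by linarith
  rw [← setIntegral_congr_fun measurableSet_Ioi (outer_eq hS), key,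
    integral_rpow_mul_exp_neg_mul_Ioi hb h2]
  rw [one_div_div, Real.div_rpow (by norm_num) hS.le, div_eq_mul_inv,
    ← Real.rpow_neg hS.le]
  ring

/-- the double integral over (σ², θ) of the (prior × likelihood) kernel. -/
theorem integrated_likelihood_formula
    (n q : ℕ) (hq : 1 ≤ q) (hnq : q < n)
    (Sg : Matrix (Fin n) (Fin n) ℝ) (hSg : Sg.PosDef)
    (X : Matrix (Fin n) (Fin q) ℝ) (hX : X.rank = q)
    (y : Fin n → ℝ) (hy : ¬ ∃ θ : Fin q → ℝ, X.mulVec θ = y)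
    (a : ℝ) (ha : 1 - ((n : ℝ) - q) / 2 < a) :
    (∫ s in Set.Ioi (0 : ℝ), ∫ θ : Fin q → ℝ,
        s ^ (-(n : ℝ) / 2 - a) * Sg.det ^ (-(1 : ℝ) / 2) *
          Real.exp (-((y - X.mulVec θ) ⬝ᵥ Sg⁻¹.mulVec (y - X.mulVec θ)) / (2 * s)))
      = (2 * Real.pi) ^ ((q : ℝ) / 2) * (2 : ℝ) ^ (((n : ℝ) - q) / 2 + a - 1) *
        Real.Gamma (((n : ℝ) - q) / 2 + a - 1) *
        Sg.det ^ (-(1 : ℝ) / 2) * (Xᵀ * Sg⁻¹ * X).det ^ (-(1 : ℝ) / 2) *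
        (y ⬝ᵥ (Sg⁻¹ * (1 - X * (Xᵀ * Sg⁻¹ * X)⁻¹ * Xᵀ * Sg⁻¹)).mulVec y) ^
          (-(((n : ℝ) - q) / 2 + a - 1)) ∧
    IntegrableOn
      (fun p : ℝ × (Fin q → ℝ) =>
        p.1 ^ (-(n : ℝ) / 2 - a) * Sg.det ^ (-(1 : ℝ) / 2) *
          Real.exp (-((y - X.mulVec p.2) ⬝ᵥ Sg⁻¹.mulVec (y - X.mulVec p.2)) / (2 * p.1)))
      (Set.Ioi (0 : ℝ) ×ˢ (Set.univ : Set (Fin q → ℝ))) := by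
  classical
  have hSi : (Sg⁻¹).PosDef := hSg.inv
  have hSit : (Sg⁻¹)ᵀ = Sg⁻¹ := by
    have := hSi.isHermitian.eq
    rwa [conjTranspose_eq_transpose_of_trivial] at this
  have hA : (Xᵀ * Sg⁻¹ * X).PosDef := XtSiX_posDef hSg hX
  set A := Xᵀ * Sg⁻¹ * X with hAdef
  have hAinv : A * A⁻¹ = 1 := Matrix.mul_nonsing_inv _ hA.det_pos.ne'.isUnit
  set m := (A⁻¹ * Xᵀ * Sg⁻¹) *ᵥ y with hmdef
  set S := y ⬝ᵥ (Sg⁻¹ * (1 - X * A⁻¹ * Xᵀ * Sg⁻¹)) *ᵥ y with hSdef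
  have hcs : ∀ θ : Fin q → ℝ, (y - X *ᵥ θ) ⬝ᵥ Sg⁻¹ *ᵥ (y - X *ᵥ θ)
      = (θ - m) ⬝ᵥ A *ᵥ (θ - m) + S := fun θ =>
    complete_square hSit X hAdef hAinv y θ
  have hdet1 : (0:ℝ) < Sg.det ^ (-(1:ℝ)/2) := Real.rpow_pos_of_pos hSg.det_pos _
  have hdet2 : (0:ℝ) < A.det ^ (-(1:ℝ)/2) := Real.rpow_pos_of_pos hA.det_pos _
  have hSpos : 0 < S := by
    have h0 := hcs m
    rw [sub_self, Matrix.mulVec_zero, dotProduct_zero, zero_add] at h0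
    have hym : y - X *ᵥ m ≠ 0 := by
      intro h
      exact hy ⟨m, by rw [← sub_eq_zero]; rw [sub_eq_zero] at h; rw [h.symm]; abel⟩
    have := hSi.dotProduct_mulVec_pos hym
    rw [star_trivial] at this
    rw [← h0]
    exact this
  set b := ((n:ℝ) - q)/2 + a - 1 with hbdef
  have hb : 0 < b := by rw [hbdef]; linarith
  -- pointwise rewriting of the integrand, for s > 0
  have hpt : ∀ s : ℝ, 0 < s → ∀ θ : Fin q → ℝ,
      s ^ (-(n : ℝ) / 2 - a) * Sg.det ^ (-(1:ℝ)/2) *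
        Real.exp (-((y - X *ᵥ θ) ⬝ᵥ Sg⁻¹ *ᵥ (y - X *ᵥ θ)) / (2*s))
      = (s ^ (-(n : ℝ) / 2 - a) * Sg.det ^ (-(1:ℝ)/2) * Real.exp (-S/(2*s))) *
        Real.exp (-(1/(2*s)) * ((θ - m) ⬝ᵥ A *ᵥ (θ - m))) := by
    intro s hs θ
    rw [hcs θ]
    have harg : -((θ - m) ⬝ᵥ A *ᵥ (θ - m) + S) / (2*s)
        = (-(1/(2*s)) * ((θ - m) ⬝ᵥ A *ᵥ (θ - m))) + (-S/(2*s)) := by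
      field_simp
      ring
    rw [harg, Real.exp_add]
    ring
  have hslice : ∀ s : ℝ, 0 < s → Integrable (fun θ : Fin q → ℝ =>
      s ^ (-(n : ℝ) / 2 - a) * Sg.det ^ (-(1:ℝ)/2) *
        Real.exp (-((y - X *ᵥ θ) ⬝ᵥ Sg⁻¹ *ᵥ (y - X *ᵥ θ)) / (2*s))) := by
    intro s hs
    have hc : 0 < 1/(2*s) := by positivity
    have h1 := ((gauss_quad hA hc m).1.const_mul
      (s ^ (-(n : ℝ) / 2 - a) * Sg.det ^ (-(1:ℝ)/2) * Real.exp (-S/(2*s))))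
    exact (integrable_congr (Filter.Eventually.of_forall fun θ => (hpt s hs θ))).mpr h1
  have hinner : ∀ s : ℝ, 0 < s →
      (∫ θ : Fin q → ℝ, s ^ (-(n : ℝ) / 2 - a) * Sg.det ^ (-(1:ℝ)/2) *
        Real.exp (-((y - X *ᵥ θ) ⬝ᵥ Sg⁻¹ *ᵥ (y - X *ᵥ θ)) / (2*s)))
      = ((2*π) ^ ((q:ℝ)/2) * Sg.det ^ (-(1:ℝ)/2) * A.det ^ (-(1:ℝ)/2)) *
        (s ^ (-b-1) * Real.exp (-S/(2*s))) := by
    intro s hs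
    have hc : 0 < 1/(2*s) := by positivity
    have hfe : (fun θ : Fin q → ℝ => s ^ (-(n : ℝ) / 2 - a) * Sg.det ^ (-(1:ℝ)/2) *
        Real.exp (-((y - X *ᵥ θ) ⬝ᵥ Sg⁻¹ *ᵥ (y - X *ᵥ θ)) / (2*s)))
        = fun θ => (s ^ (-(n : ℝ) / 2 - a) * Sg.det ^ (-(1:ℝ)/2) * Real.exp (-S/(2*s))) *
          Real.exp (-(1/(2*s)) * ((θ - m) ⬝ᵥ A *ᵥ (θ - m))) := funext (hpt s hs)
    rw [hfe, integral_const_mul, (gauss_quad hA hc m).2]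
    have hps : π / (1/(2*s)) = (2*π) * s := by
      field_simp
    rw [hps, Real.mul_rpow (by positivity) hs.le]
    have hse : s ^ (-(n : ℝ) / 2 - a) * s ^ ((q:ℝ)/2) = s ^ (-b-1) := by
      rw [← Real.rpow_add hs, hbdef]
      congr 1
      ring
    calc s ^ (-(n:ℝ)/2 - a) * Sg.det ^ (-(1:ℝ)/2) * Real.exp (-S/(2*s)) *
          ((2*π) ^ ((q:ℝ)/2) * s ^ ((q:ℝ)/2) * A.det ^ (-(1:ℝ)/2))
        = (s ^ (-(n:ℝ)/2 - a) * s ^ ((q:ℝ)/2)) * (Sg.det ^ (-(1:ℝ)/2) *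
            Real.exp (-S/(2*s)) * ((2*π) ^ ((q:ℝ)/2) * A.det ^ (-(1:ℝ)/2))) := by ring
      _ = ((2*π) ^ ((q:ℝ)/2) * Sg.det ^ (-(1:ℝ)/2) * A.det ^ (-(1:ℝ)/2)) *
            (s ^ (-b-1) * Real.exp (-S/(2*s))) := by rw [hse]; ring
  constructor
  · rw [setIntegral_congr_fun measurableSet_Ioi (fun s hs => hinner s hs),
      integral_const_mul, outer_integral hb hSpos]
    ring
  · have hmu : Continuous (fun v : Fin q → ℝ => X *ᵥ v) := by
      have h := (Matrix.toLin' X).continuous_of_finiteDimensional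
      have he : (fun v : Fin q → ℝ => X *ᵥ v) = ⇑(Matrix.toLin' X) := by
        funext v; rw [Matrix.toLin'_apply]
      rw [he]; exact h
    have hSgm : Continuous (fun w : Fin n → ℝ => Sg⁻¹ *ᵥ w) := by
      have h := (Matrix.toLin' Sg⁻¹).continuous_of_finiteDimensional
      have he : (fun w : Fin n → ℝ => Sg⁻¹ *ᵥ w) = ⇑(Matrix.toLin' Sg⁻¹) := by
        funext w; rw [Matrix.toLin'_apply]
      rw [he]; exact h
    have hsub : Continuous (fun v : Fin q → ℝ => y - X *ᵥ v) := continuous_const.sub hmu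
    have hcontquad : Continuous
        (fun v : Fin q → ℝ => (y - X *ᵥ v) ⬝ᵥ Sg⁻¹ *ᵥ (y - X *ᵥ v)) := by
      have : (fun v : Fin q → ℝ => (y - X *ᵥ v) ⬝ᵥ Sg⁻¹ *ᵥ (y - X *ᵥ v))
          = fun v => ∑ i, (y - X *ᵥ v) i * (Sg⁻¹ *ᵥ (y - X *ᵥ v)) i := by
        funext v; rfl
      rw [this]
      exact continuous_finset_sum _ fun i _ =>
        ((continuous_apply i).comp hsub).mul
          ((continuous_apply i).comp (hSgm.comp hsub))
    have hfm : AEStronglyMeasurable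
        (fun p : ℝ × (Fin q → ℝ) =>
          p.1 ^ (-(n : ℝ) / 2 - a) * Sg.det ^ (-(1 : ℝ) / 2) *
            Real.exp (-((y - X *ᵥ p.2) ⬝ᵥ Sg⁻¹ *ᵥ (y - X *ᵥ p.2)) / (2 * p.1)))
        ((volume.restrict (Ioi (0:ℝ))).prod (volume : Measure (Fin q → ℝ))) := by
      apply Measurable.aestronglyMeasurable
      refine Measurable.mul (Measurable.mul ?_ measurable_const) ?_
      · exact measurable_fst.pow_const _
      · exact Real.measurable_exp.comp
          (((hcontquad.measurable.comp measurable_snd).neg).div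
            (measurable_fst.const_mul 2))
    rw [IntegrableOn, Measure.volume_eq_prod, ← Measure.prod_restrict,
      Measure.restrict_univ]
    refine (integrable_prod_iff hfm).mpr ⟨?_, ?_⟩
    · filter_upwards [ae_restrict_mem measurableSet_Ioi] with s hs
      simpa using hslice s hs
    · have houter := (outer_integrable hb hSpos).const_mul
        ((2*π) ^ ((q:ℝ)/2) * Sg.det ^ (-(1:ℝ)/2) * A.det ^ (-(1:ℝ)/2))
      apply houter.congr
      filter_upwards [ae_restrict_mem measurableSet_Ioi] with s hs
      have hs0 : (0:ℝ) < s := hs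
      rw [← hinner s hs0]
      refine integral_congr_ae (Filter.Eventually.of_forall fun θ => ?_)
      have hnn : 0 ≤ s ^ (-(n : ℝ) / 2 - a) * Sg.det ^ (-(1:ℝ)/2) *
          Real.exp (-((y - X *ᵥ θ) ⬝ᵥ Sg⁻¹ *ᵥ (y - X *ᵥ θ)) / (2*s)) := by
        have h1 : (0:ℝ) < s ^ (-(n : ℝ) / 2 - a) := Real.rpow_pos_of_pos hs0 _
        positivity
      exact (Real.norm_of_nonneg hnn).symm
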